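/- arXiv:2306.03196 — 4 statements merged into one kernel-verified Lean document; each statement's English description precedes it below -/
import Mathlib

section
/- Let G be a finite simple graph, let s and t be two distinct vertices of G, and let D be an st-orientation of G (an acyclic orientation whose unique source is s and unique sink is t) with no transitive edges. Let a, b, f, m be four pairwise distinct vertices of G such that {a,f}, {f,b}, {a,m}, {m,b} are edges of G, the vertex m has degree exactly 2 in G, and m ∉ {s,t}. Then the edge {a,f} is oriented from a to f if and only if the edge {f,b} is oriented from f to b. -/
/-- In a non-transitive st-orientation, a 2-path a–m–b through a
degree-2 vertex m (with m ∉ {s,t}) forces the edges {a,f} and {f,b} to be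
consistently oriented relative to f: the edge {a,f} is oriented from a to f
iff the edge {f,b} is oriented from f to b. -/
theorem stmt0 {V : Type*} [Fintype V] [DecidableEq V]
    (G : SimpleGraph V) [DecidableRel G.Adj]
    (s t : V) (hst : s ≠ t)
    (D : V → V → Prop)
    -- D is an orientation of G
    (hOrient : ∀ u v, D u v → G.Adj u v)
    (hTotal : ∀ u v, G.Adj u v → (D u v ↔ ¬ D v u))
    -- D is acyclic
    (hAcyclic : ∀ x, ¬ Relation.TransGen D x x)
    -- s is the unique source, t is the unique sink
    (hSource : ∀ u, ¬ D u s)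
    (hSink : ∀ u, ¬ D t u)
    (hSourceUnique : ∀ v, (∀ u, ¬ D u v) → v = s)
    (hSinkUnique : ∀ v, (∀ u, ¬ D v u) → v = t)
    -- D has no transitive edges
    (hNonTransitive : ∀ u v, D u v →
      ¬ ∃ w, w ≠ v ∧ D u w ∧ Relation.ReflTransGen D w v)
    -- the configuration
    (a b f m : V)
    (hab : a ≠ b) (haf : a ≠ f) (ham : a ≠ m)
    (hbf : b ≠ f) (hbm : b ≠ m) (hfm : f ≠ m)
    (hEaf : G.Adj a f) (hEfb : G.Adj f b) (hEam : G.Adj a m) (hEmb : G.Adj m b)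
    (hdeg : G.degree m = 2)
    (hms : m ≠ s) (hmt : m ≠ t) :
    (D a f ↔ D f b) := by
  -- neighbors of m are exactly a and b
  have hN : ∀ u, G.Adj m u → u = a ∨ u = b := by
    intro u hu
    have hsub : ({a, b} : Finset V) ⊆ G.neighborFinset m := by
      intro x hx
      simp only [Finset.mem_insert, Finset.mem_singleton] at hx
      rcases hx with rfl | rfl
      · exact (SimpleGraph.mem_neighborFinset G m x).mpr hEam.symm
      · exact (SimpleGraph.mem_neighborFinset G m x).mpr hEmb
    have hcard : ({a, b} : Finset V).card = 2 := by
      rw [Finset.card_insert_of_notMem (by simpa using hab), Finset.card_singleton]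
    have heq : ({a, b} : Finset V) = G.neighborFinset m := by
      apply Finset.eq_of_subset_of_card_le hsub
      rw [hcard]; exact le_of_eq hdeg
    have : u ∈ ({a, b} : Finset V) := by
      rw [heq]; exact (SimpleGraph.mem_neighborFinset G m u).mpr hu
    simpa using this
  by_cases hDam : D a m
  · have hDmb : D m b := by
      by_contra hn
      have hDbm : D b m := by
        have := hTotal m b hEmb
        tauto
      have : m = t := by
        apply hSinkUnique
        intro u hDmu
        rcases hN u (hOrient m u hDmu) with rfl | rfl
        · exact ((hTotal u m hEam).mp hDam) hDmu
        · exact hn hDmu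
      exact hmt this
    constructor
    · intro hDaf
      by_contra hnfb
      have hDbf : D b f := by
        have := hTotal f b hEfb; tauto
      exact hNonTransitive a f hDaf
        ⟨m, hfm.symm, hDam,
          Relation.ReflTransGen.head hDmb (Relation.ReflTransGen.single hDbf)⟩
    · intro hDfb
      by_contra hnaf
      have hDfa : D f a := by
        have := hTotal a f hEaf; tauto
      exact hNonTransitive f b hDfb
        ⟨a, hab, hDfa,
          Relation.ReflTransGen.head hDam (Relation.ReflTransGen.single hDmb)⟩
  · have hDma : D m a := by
      have := hTotal a m hEam; tauto
    have hDbm : D b m := by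
      by_contra hn
      have : m = s := by
        apply hSourceUnique
        intro u hDum
        rcases hN u (hOrient u m hDum).symm with rfl | rfl
        · exact hDam hDum
        · exact hn hDum
      exact hms this
    constructor
    · intro hDaf
      by_contra hnfb
      have hDbf : D b f := by
        have := hTotal f b hEfb; tauto
      exact hNonTransitive b f hDbf
        ⟨m, hfm.symm, hDbm,
          Relation.ReflTransGen.head hDma (Relation.ReflTransGen.single hDaf)⟩
    · intro hDfb
      by_contra hnaf
      have hDfa : D f a := by
        have := hTotal a f hEaf; tauto
      exact hNonTransitive f a hDfa
        ⟨b, hab.symm, hDfb,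
          Relation.ReflTransGen.head hDbm (Relation.ReflTransGen.single hDma)⟩
end

section
/- Let G be a finite simple graph, let s and t be two distinct vertices of G, and let D be an st-orientation of G (an acyclic orientation whose unique source is s and unique sink is t) with no transitive edges. Let a, b, c, f, m₁, m₂ be six pairwise distinct vertices of G such that {a,f}, {f,b}, {f,c}, {a,m₁}, {m₁,b}, {a,m₂}, {m₂,c} are edges of G, the vertices m₁ and m₂ each have degree exactly 2 in G, and m₁, m₂ ∉ {s,t}. Then either the edge {a,f} is oriented toward f and both edges {f,b}, {f,c} are oriented away from f, or the edge {a,f} is oriented away from f and both edges {f,b}, {f,c} are oriented toward f. -/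
/-- A degree-2 internal vertex with neighbors `a` and `b` is traversed
either from `a` to `b` or from `b` to `a`. -/
lemma fork_mid {V : Type*} [Fintype V] [DecidableEq V]
    (G : SimpleGraph V) [DecidableRel G.Adj]
    (s t : V) (D : V → V → Prop)
    (hOrient : ∀ u v, D u v → G.Adj u v)
    (hTotal : ∀ u v, G.Adj u v → (D u v ↔ ¬ D v u))
    (hSourceUnique : ∀ v, (∀ u, ¬ D u v) → v = s)
    (hSinkUnique : ∀ v, (∀ u, ¬ D v u) → v = t)
    (a b m : V) (hab : a ≠ b)
    (h1 : G.Adj a m) (h2 : G.Adj m b)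
    (hdeg : G.degree m = 2) (hms : m ≠ s) (hmt : m ≠ t) :
    (D a m ∧ D m b) ∨ (D b m ∧ D m a) := by
  have hnb : G.neighborFinset m = {a, b} := by
    symm
    apply Finset.eq_of_subset_of_card_le
    · intro x hx
      simp only [Finset.mem_insert, Finset.mem_singleton] at hx
      rcases hx with rfl | rfl
      · simpa using h1.symm
      · simpa using h2
    · rw [SimpleGraph.card_neighborFinset_eq_degree, hdeg, Finset.card_insert_of_notMem (by simpa using hab), Finset.card_singleton]
  have hmem : ∀ x, G.Adj m x → x = a ∨ x = b := by
    intro x hx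
    have : x ∈ G.neighborFinset m := by simpa using hx
    rw [hnb] at this
    simpa using this
  have hin : ∃ u, D u m := by
    by_contra h
    push_neg at h
    exact hms (hSourceUnique m h)
  have hout : ∃ u, D m u := by
    by_contra h
    push_neg at h
    exact hmt (hSinkUnique m h)
  obtain ⟨u, hu⟩ := hin
  obtain ⟨v, hv⟩ := hout
  have hu' := hmem u (hOrient u m hu).symm
  have hv' := hmem v (hOrient m v hv)
  rcases hu' with rfl | rfl
  · left
    refine ⟨hu, ?_⟩
    rcases hv' with rfl | rfl
    · exact absurd hu ((hTotal m v (hOrient m v hv)).mp hv)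
    · exact hv
  · right
    refine ⟨hu, ?_⟩
    rcases hv' with rfl | rfl
    · exact hv
    · exact absurd hu ((hTotal m v (hOrient m v hv)).mp hv)


/-- extended fork gadget lemma: in any non-transitive
st-orientation of a graph containing the extended fork configuration avoiding
s and t, either edge {a,f} enters f and edges {f,b}, {f,c} exit f, or
vice versa. -/
theorem stmt1 {V : Type*} [Fintype V] [DecidableEq V]
    (G : SimpleGraph V) [DecidableRel G.Adj]
    (s t : V) (hst : s ≠ t)
    (D : V → V → Prop)
    -- D is an orientation of G
    (hOrient : ∀ u v, D u v → G.Adj u v)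
    (hTotal : ∀ u v, G.Adj u v → (D u v ↔ ¬ D v u))
    -- D is acyclic
    (hAcyclic : ∀ x, ¬ Relation.TransGen D x x)
    -- s is the unique source, t is the unique sink
    (hSource : ∀ u, ¬ D u s)
    (hSink : ∀ u, ¬ D t u)
    (hSourceUnique : ∀ v, (∀ u, ¬ D u v) → v = s)
    (hSinkUnique : ∀ v, (∀ u, ¬ D v u) → v = t)
    -- D has no transitive edges
    (hNonTransitive : ∀ u v, D u v →
      ¬ ∃ w, w ≠ v ∧ D u w ∧ Relation.ReflTransGen D w v)
    -- the extended fork configuration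
    (a b c f m₁ m₂ : V)
    (hdistinct : [a, b, c, f, m₁, m₂].Nodup)
    (hEaf : G.Adj a f) (hEfb : G.Adj f b) (hEfc : G.Adj f c)
    (hEam₁ : G.Adj a m₁) (hEm₁b : G.Adj m₁ b)
    (hEam₂ : G.Adj a m₂) (hEm₂c : G.Adj m₂ c)
    (hdeg₁ : G.degree m₁ = 2) (hdeg₂ : G.degree m₂ = 2)
    (hm₁s : m₁ ≠ s) (hm₁t : m₁ ≠ t) (hm₂s : m₂ ≠ s) (hm₂t : m₂ ≠ t) :
    (D a f ∧ D f b ∧ D f c) ∨ (D f a ∧ D b f ∧ D c f) := by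
  simp only [List.nodup_cons, List.mem_cons, List.mem_singleton, List.not_mem_nil,
    or_false, not_or, List.nodup_nil, and_true] at hdistinct
  obtain ⟨⟨hab, hac, haf, ham₁, ham₂⟩, ⟨hbc, hbf, hbm₁, hbm₂⟩, ⟨hcf, hcm₁, hcm₂⟩,
    ⟨hfm₁, hfm₂⟩, hm₁m₂⟩ := hdistinct
  have H1 := fork_mid G s t D hOrient hTotal hSourceUnique hSinkUnique a b m₁ hab hEam₁ hEm₁b hdeg₁ hm₁s hm₁t
  have H2 := fork_mid G s t D hOrient hTotal hSourceUnique hSinkUnique a c m₂ hac hEam₂ hEm₂c hdeg₂ hm₂s hm₂t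
  rcases H1 with ⟨ham, hmb⟩ | ⟨hbm, hma⟩ <;> rcases H2 with ⟨ham2, hmc⟩ | ⟨hcm, hma2⟩
  · -- a→m₁→b, a→m₂→c : conclude D a f, D f b, D f c
    have hfb : D f b := by
      by_contra h
      have hbf' : D b f := by
        have := hTotal f b hEfb
        tauto
      have hnaf : ¬ D a f := by
        intro haf'
        exact hNonTransitive a f haf' ⟨m₁, Ne.symm hfm₁, ham,
          Relation.ReflTransGen.head hmb (Relation.ReflTransGen.single hbf')⟩
      have hfa : D f a := by
        have := hTotal a f hEaf
        tauto
      exact hAcyclic f (Relation.TransGen.head hfa (Relation.TransGen.head ham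
        (Relation.TransGen.head hmb (Relation.TransGen.single hbf'))))
    have hfc : D f c := by
      by_contra h
      have hcf' : D c f := by
        have := hTotal f c hEfc
        tauto
      have hnaf : ¬ D a f := by
        intro haf'
        exact hNonTransitive a f haf' ⟨m₂, Ne.symm hfm₂, ham2,
          Relation.ReflTransGen.head hmc (Relation.ReflTransGen.single hcf')⟩
      have hfa : D f a := by
        have := hTotal a f hEaf
        tauto
      exact hAcyclic f (Relation.TransGen.head hfa (Relation.TransGen.head ham2
        (Relation.TransGen.head hmc (Relation.TransGen.single hcf'))))
    have haf' : D a f := by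
      by_contra h
      have hfa : D f a := by
        have := hTotal a f hEaf
        tauto
      exact hNonTransitive f b hfb ⟨a, hab, hfa,
        Relation.ReflTransGen.head ham (Relation.ReflTransGen.single hmb)⟩
    exact Or.inl ⟨haf', hfb, hfc⟩
  · -- a→m₁→b, c→m₂→a : impossible
    exfalso
    have hnaf : ¬ D a f := by
      intro haf'
      by_cases hfc : D f c
      · exact hAcyclic f (Relation.TransGen.head hfc (Relation.TransGen.head hcm
          (Relation.TransGen.head hma2 (Relation.TransGen.single haf'))))
      · have hcf : D c f := by
          have := hTotal f c hEfc
          tauto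
        exact hNonTransitive c f hcf ⟨m₂, Ne.symm hfm₂, hcm,
          Relation.ReflTransGen.head hma2 (Relation.ReflTransGen.single haf')⟩
    have hfa : D f a := by
      have := hTotal a f hEaf
      tauto
    have hnfb : ¬ D f b := by
      intro hfb
      exact hNonTransitive f b hfb ⟨a, hab, hfa,
        Relation.ReflTransGen.head ham (Relation.ReflTransGen.single hmb)⟩
    have hbf : D b f := by
      have := hTotal f b hEfb
      tauto
    exact hAcyclic f (Relation.TransGen.head hfa (Relation.TransGen.head ham
      (Relation.TransGen.head hmb (Relation.TransGen.single hbf))))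
  · -- b→m₁→a, a→m₂→c : impossible
    exfalso
    have hnaf : ¬ D a f := by
      intro haf'
      by_cases hfb : D f b
      · exact hAcyclic f (Relation.TransGen.head hfb (Relation.TransGen.head hbm
          (Relation.TransGen.head hma (Relation.TransGen.single haf'))))
      · have hbf : D b f := by
          have := hTotal f b hEfb
          tauto
        exact hNonTransitive b f hbf ⟨m₁, Ne.symm hfm₁, hbm,
          Relation.ReflTransGen.head hma (Relation.ReflTransGen.single haf')⟩
    have hfa : D f a := by
      have := hTotal a f hEaf
      tauto
    have hnfc : ¬ D f c := by
      intro hfc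
      exact hNonTransitive f c hfc ⟨a, hac, hfa,
        Relation.ReflTransGen.head ham2 (Relation.ReflTransGen.single hmc)⟩
    have hcf : D c f := by
      have := hTotal f c hEfc
      tauto
    exact hAcyclic f (Relation.TransGen.head hfa (Relation.TransGen.head ham2
      (Relation.TransGen.head hmc (Relation.TransGen.single hcf))))
  · -- b→m₁→a, c→m₂→a : conclude D f a, D b f, D c f
    have hbf : D b f := by
      by_contra h
      have hfb : D f b := by
        have := hTotal f b hEfb
        tauto
      have hnfa : ¬ D f a := by
        intro hfa
        exact hNonTransitive f a hfa ⟨b, Ne.symm hab, hfb,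
          Relation.ReflTransGen.head hbm (Relation.ReflTransGen.single hma)⟩
      have haf' : D a f := by
        have := hTotal a f hEaf
        tauto
      exact hAcyclic f (Relation.TransGen.head hfb (Relation.TransGen.head hbm
        (Relation.TransGen.head hma (Relation.TransGen.single haf'))))
    have hcf : D c f := by
      by_contra h
      have hfc : D f c := by
        have := hTotal f c hEfc
        tauto
      have hnfa : ¬ D f a := by
        intro hfa
        exact hNonTransitive f a hfa ⟨c, Ne.symm hac, hfc,
          Relation.ReflTransGen.head hcm (Relation.ReflTransGen.single hma2)⟩
      have haf' : D a f := by
        have := hTotal a f hEaf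
        tauto
      exact hAcyclic f (Relation.TransGen.head hfc (Relation.TransGen.head hcm
        (Relation.TransGen.head hma2 (Relation.TransGen.single haf'))))
    have hfa : D f a := by
      by_contra h
      have haf' : D a f := by
        have := hTotal a f hEaf
        tauto
      exact hNonTransitive b f hbf ⟨m₁, Ne.symm hfm₁, hbm,
        Relation.ReflTransGen.head hma (Relation.ReflTransGen.single haf')⟩
    exact Or.inr ⟨hfa, hbf, hcf⟩
end

section
/- Let D be an acyclic digraph on a vertex type V with no transitive edges, and let g be a vertex with no D-edges incident to it. Let I and O be sets of vertices not containing g, and let D' be obtained from D by adding the edges b → g for every b ∈ I and g → a for every a ∈ O. Assume: (i) there is no a ∈ O and b ∈ I with b reachable from a under the reflexive-transitive closure of D; (ii) there is no D-edge (u,v), b ∈ I, and a ∈ O such that b is reachable from u and v is reachable from a under the reflexive-transitive closure of D; (iii) there are no distinct b, b' ∈ I with b' reachable from b by a directed path of positive length in D; (iv) there are no distinct a, a' ∈ O with a' reachable from a by a directed path of positive length in D. Then D' is acyclic and has no transitive edges. -/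
/-- adding an apex vertex g (in-neighbors I, out-neighbors O) to
an acyclic non-transitive digraph D yields an acyclic non-transitive digraph,
provided (i) no a ∈ O reaches some b ∈ I; (ii) no D-edge (u,v) has b ∈ I
reachable from u and v reachable from a ∈ O; (iii) no two distinct vertices of
I are connected by a directed path of positive length; (iv) same for O. -/
theorem stmt5 {V : Type*} (D : V → V → Prop)
    -- D is acyclic
    (hAcyclic : ∀ x, ¬ Relation.TransGen D x x)
    -- D has no transitive edges
    (hNonTransitive : ∀ u v, D u v →
      ¬ ∃ w, w ≠ v ∧ D u w ∧ Relation.ReflTransGen D w v)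
    -- g has no D-edges incident to it
    (g : V) (hg : ∀ x, ¬ D x g ∧ ¬ D g x)
    -- I and O are sets of vertices not containing g
    (I O : Set V) (hgI : g ∉ I) (hgO : g ∉ O)
    -- D' adds the edges b → g for b ∈ I and g → a for a ∈ O
    (D' : V → V → Prop)
    (hD' : ∀ u v, D' u v ↔ (D u v ∨ (u ∈ I ∧ v = g) ∨ (u = g ∧ v ∈ O)))
    -- (i) no a ∈ O and b ∈ I with b reachable from a in D
    (hi : ¬ ∃ a ∈ O, ∃ b ∈ I, Relation.ReflTransGen D a b)
    -- (ii) no D-edge (u,v), b ∈ I and a ∈ O with b reachable from u and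
    -- v reachable from a in D
    (hii : ¬ ∃ u v, D u v ∧ ∃ b ∈ I, ∃ a ∈ O,
      Relation.ReflTransGen D u b ∧ Relation.ReflTransGen D a v)
    -- (iii) no distinct b, b' ∈ I with b' reachable from b by a directed
    -- path of positive length in D
    (hiii : ¬ ∃ b ∈ I, ∃ b' ∈ I, b ≠ b' ∧ Relation.TransGen D b b')
    -- (iv) no distinct a, a' ∈ O with a' reachable from a by a directed
    -- path of positive length in D
    (hiv : ¬ ∃ a ∈ O, ∃ a' ∈ O, a ≠ a' ∧ Relation.TransGen D a a') :
    -- D' is acyclic and has no transitive edges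
    (∀ x, ¬ Relation.TransGen D' x x) ∧
    (∀ u v, D' u v →
      ¬ ∃ w, w ≠ v ∧ D' u w ∧ Relation.ReflTransGen D' w v) := by
  have hDg1 : ∀ y, Relation.ReflTransGen D g y → y = g := by
    intro y h
    induction h with
    | refl => rfl
    | tail h e ih => subst ih; exact absurd e (hg _).2
  have hDg2 : ∀ x, Relation.ReflTransGen D x g → x = g := by
    intro x h
    induction h using Relation.ReflTransGen.head_induction_on with
    | refl => rfl
    | head e h ih => subst ih; exact absurd e (hg _).1
  have hP : ∀ x y, Relation.ReflTransGen D' x y →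
      Relation.ReflTransGen D x y ∨
      (x ≠ g ∧ y = g ∧ ∃ b ∈ I, Relation.ReflTransGen D x b) ∨
      (x = g ∧ y ≠ g ∧ ∃ a ∈ O, Relation.ReflTransGen D a y) ∨
      (x ≠ g ∧ y ≠ g ∧ ∃ b ∈ I, ∃ a ∈ O,
        Relation.ReflTransGen D x b ∧ Relation.ReflTransGen D a y) := by
    intro x y h
    induction h with
    | refl => exact Or.inl .refl
    | @tail b c h e ih =>
      rcases (hD' b c).1 e with hbc | ⟨hbI, hcg'⟩ | ⟨hbg', hcO⟩
      · have hbg : b ≠ g := fun hh => (hg c).2 (hh ▸ hbc)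
        have hcg : c ≠ g := fun hh => (hg b).1 (hh ▸ hbc)
        rcases ih with h1 | ⟨_, hb2, _⟩ | ⟨hx, _, a, haO, hab⟩ |
            ⟨hx, _, b', hb'I, a, haO, hxb, hab⟩
        · exact Or.inl (h1.tail hbc)
        · exact absurd hb2 hbg
        · exact Or.inr (Or.inr (Or.inl ⟨hx, hcg, a, haO, hab.tail hbc⟩))
        · exact Or.inr (Or.inr (Or.inr ⟨hx, hcg, b', hb'I, a, haO, hxb,
            hab.tail hbc⟩))
      · have hbg : b ≠ g := fun hh => hgI (hh ▸ hbI)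
        rcases ih with h1 | ⟨_, hb2, _⟩ | ⟨hx, _, a, haO, hab⟩ |
            ⟨hx, _, b', hb'I, a, haO, hxb, hab⟩
        · have hxg : x ≠ g := fun hh => hbg (hDg1 b (hh ▸ h1))
          exact Or.inr (Or.inl ⟨hxg, hcg', b, hbI, h1⟩)
        · exact absurd hb2 hbg
        · exact absurd ⟨a, haO, b, hbI, hab⟩ hi
        · exact absurd ⟨a, haO, b, hbI, hab⟩ hi
      · have hcg : c ≠ g := fun hh => hgO (hh ▸ hcO)
        rcases ih with h1 | ⟨hx, _, b', hb'I, hxb⟩ | ⟨_, hgg, _⟩ | ⟨_, hgg, _⟩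
        · exact Or.inr (Or.inr (Or.inl ⟨hDg2 x (hbg' ▸ h1), hcg, c, hcO, .refl⟩))
        · exact Or.inr (Or.inr (Or.inr ⟨hx, hcg, b', hb'I, c, hcO, hxb, .refl⟩))
        · exact absurd hbg' hgg
        · exact absurd hbg' hgg
  constructor
  · intro x hcyc
    obtain ⟨w, hxw, hwx⟩ := Relation.TransGen.head'_iff.1 hcyc
    rcases (hD' x w).1 hxw with hxw0 | ⟨hxI, hwg'⟩ | ⟨hxg', hwO⟩
    · have hxg : x ≠ g := fun hh => (hg w).2 (hh ▸ hxw0)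
      have hwg : w ≠ g := fun hh => (hg x).1 (hh ▸ hxw0)
      rcases hP w x hwx with h1 | ⟨_, hx2, _⟩ | ⟨hw2, _, _⟩ |
          ⟨_, _, b, hbI, a, haO, hwb, hax⟩
      · exact hAcyclic x (Relation.TransGen.head' hxw0 h1)
      · exact absurd hx2 hxg
      · exact absurd hw2 hwg
      · exact hii ⟨x, w, hxw0, b, hbI, a, haO,
          Relation.ReflTransGen.head hxw0 hwb, hax.tail hxw0⟩
    · rw [hwg'] at hwx
      rcases hP g x hwx with h1 | ⟨hgg, _, _⟩ | ⟨_, _, a, haO, hax⟩ |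
          ⟨hgg, _, _⟩
      · exact hgI ((hDg1 x h1) ▸ hxI)
      · exact absurd rfl hgg
      · exact hi ⟨a, haO, x, hxI, hax⟩
      · exact absurd rfl hgg
    · rw [hxg'] at hwx
      rcases hP w g hwx with h1 | ⟨_, _, b, hbI, hwb⟩ | ⟨hw2, _, _⟩ |
          ⟨_, hgg, _⟩
      · exact hgO ((hDg2 w h1) ▸ hwO)
      · exact hi ⟨w, hwO, b, hbI, hwb⟩
      · exact hgO (hw2 ▸ hwO)
      · exact absurd rfl hgg
  · rintro u v huv ⟨w, hwv, huw, hwvR⟩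
    rcases (hD' u v).1 huv with huv0 | ⟨huI, hvg'⟩ | ⟨hug', hvO⟩
    · have hug : u ≠ g := fun hh => (hg v).2 (hh ▸ huv0)
      have hvg : v ≠ g := fun hh => (hg u).1 (hh ▸ huv0)
      rcases (hD' u w).1 huw with huw0 | ⟨_, hwg'⟩ | ⟨hug'', _⟩
      · rcases hP w v hwvR with h1 | ⟨_, hv2, _⟩ | ⟨hw2, _, _⟩ |
            ⟨_, _, b, hbI, a, haO, hwb, hav⟩
        · exact hNonTransitive u v huv0 ⟨w, hwv, huw0, h1⟩
        · exact absurd hv2 hvg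
        · exact (hg u).1 (hw2 ▸ huw0)
        · exact hii ⟨u, v, huv0, b, hbI, a, haO,
            Relation.ReflTransGen.head huw0 hwb, hav⟩
      · rw [hwg'] at hwvR
        rcases hP g v hwvR with h1 | ⟨hgg, _, _⟩ | ⟨_, _, a, haO, hav⟩ |
            ⟨hgg, _, _⟩
        · exact hvg (hDg1 v h1)
        · exact absurd rfl hgg
        · exact hii ⟨u, v, huv0, u, ‹u ∈ I›, a, haO, .refl, hav⟩
        · exact absurd rfl hgg
      · exact hug hug''
    · rcases (hD' u w).1 huw with huw0 | ⟨_, hwg'⟩ | ⟨hug'', _⟩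
      · rw [hvg'] at hwvR
        rcases hP w g hwvR with h1 | ⟨_, _, b, hbI, hwb⟩ | ⟨hw2, _, _⟩ |
            ⟨_, hgg, _⟩
        · exact (hvg' ▸ hwv) (hDg2 w h1)
        · have ht : Relation.TransGen D u b := Relation.TransGen.head' huw0 hwb
          by_cases heq : u = b
          · exact hAcyclic u (heq ▸ ht)
          · exact hiii ⟨u, huI, b, hbI, heq, ht⟩
        · exact (hg u).1 (hw2 ▸ huw0)
        · exact absurd rfl hgg
      · exact hwv (hwg'.trans hvg'.symm)
      · exact hgI (hug'' ▸ huI)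
    · have hvg : v ≠ g := fun hh => hgO (hh ▸ hvO)
      rw [hug'] at huw
      rcases (hD' g w).1 huw with huw0 | ⟨hgI', _⟩ | ⟨_, hwO⟩
      · exact (hg w).2 huw0
      · exact hgI hgI'
      · rcases hP w v hwvR with h1 | ⟨_, hv2, _⟩ | ⟨hw2, _, _⟩ |
            ⟨_, _, b, hbI, _, _, hwb, _⟩
        · rcases Relation.reflTransGen_iff_eq_or_transGen.1 h1 with he | ht
          · exact hwv he.symm
          · exact hiv ⟨w, hwO, v, hvO, hwv, ht⟩
        · exact absurd hv2 hvg
        · exact hgO (hw2 ▸ hwO)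
        · exact hi ⟨w, hwO, b, hbI, hwb⟩
end

section
/- Let D be a digraph on a vertex type V, let g be a vertex with no D-edges incident to it, let I and O be sets of vertices not containing g, and let D' be obtained from D by adding the edges b → g for every b ∈ I and g → a for every a ∈ O. Assume D' is acyclic. Then a D-edge (u,v) is transitive in D' if and only if it is transitive in D or there exist b ∈ I and a ∈ O such that b is reachable from u and v is reachable from a under the reflexive-transitive closure of D. -/
/-- after adding an apex vertex g (in-neighbors I, out-neighbors
O) to a digraph D, and assuming the result D' is acyclic, a D-edge (u,v) is
transitive in D' iff it is transitive in D or there exist b ∈ I and a ∈ O with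
b reachable from u and v reachable from a in D. -/
theorem stmt6 {V : Type*} (D : V → V → Prop)
    -- g has no D-edges incident to it
    (g : V) (hg : ∀ x, ¬ D x g ∧ ¬ D g x)
    -- I and O are sets of vertices not containing g
    (I O : Set V) (hgI : g ∉ I) (hgO : g ∉ O)
    -- D' adds the edges b → g for b ∈ I and g → a for a ∈ O
    (D' : V → V → Prop)
    (hD' : ∀ u v, D' u v ↔ (D u v ∨ (u ∈ I ∧ v = g) ∨ (u = g ∧ v ∈ O)))
    -- D' is acyclic
    (hAcyclic : ∀ x, ¬ Relation.TransGen D' x x)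
    -- (u,v) is a D-edge
    (u v : V) (huv : D u v) :
    -- (u,v) is transitive in D' iff it is transitive in D or some path
    -- through g witnesses it
    ((∃ w, w ≠ v ∧ D' u w ∧ Relation.ReflTransGen D' w v) ↔
      ((∃ w, w ≠ v ∧ D u w ∧ Relation.ReflTransGen D w v) ∨
        (∃ b ∈ I, ∃ a ∈ O,
          Relation.ReflTransGen D u b ∧ Relation.ReflTransGen D a v))) := by
  have hvg : v ≠ g := fun h => (hg u).1 (h ▸ huv)
  have hug : u ≠ g := fun h => (hg v).2 (h ▸ huv)
  have lift : ∀ {x y : V}, Relation.ReflTransGen D x y → Relation.ReflTransGen D' x y :=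
    fun h => Relation.ReflTransGen.mono (fun a b hab => (hD' a b).2 (Or.inl hab)) _ _ h
  have key : ∀ x, Relation.ReflTransGen D' x v →
      (x = g → ∃ a ∈ O, Relation.ReflTransGen D a v) ∧
      (x ≠ g → Relation.ReflTransGen D x v ∨ ∃ b ∈ I, ∃ a ∈ O,
        Relation.ReflTransGen D x b ∧ Relation.ReflTransGen D a v) := by
    intro x hx
    induction hx using Relation.ReflTransGen.head_induction_on with
    | refl =>
      exact ⟨fun h => absurd h hvg, fun _ => Or.inl Relation.ReflTransGen.refl⟩
    | head hxz hzv ih =>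
      rename_i x z
      rcases (hD' x z).1 hxz with hD | ⟨hxI, hzeq⟩ | ⟨hxeq, hzO⟩
      · refine ⟨fun h => absurd hD (h ▸ (hg z).2), fun _ => ?_⟩
        have hzg : z ≠ g := fun h => (hg x).1 (h ▸ hD)
        rcases ih.2 hzg with h1 | ⟨b, hb, a, ha, h2, h3⟩
        · exact Or.inl (Relation.ReflTransGen.head hD h1)
        · exact Or.inr ⟨b, hb, a, ha, Relation.ReflTransGen.head hD h2, h3⟩
      · refine ⟨fun h => absurd (h ▸ hxI) hgI, fun _ => ?_⟩
        obtain ⟨a, ha, hav⟩ := ih.1 hzeq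
        exact Or.inr ⟨x, hxI, a, ha, Relation.ReflTransGen.refl, hav⟩
      · refine ⟨fun _ => ?_, fun h => absurd hxeq h⟩
        have hzg : z ≠ g := fun h => hgO (h ▸ hzO)
        rcases ih.2 hzg with h1 | ⟨b, hb, a, ha, h2, h3⟩
        · exact ⟨z, hzO, h1⟩
        · exact ⟨a, ha, h3⟩
  constructor
  · rintro ⟨w, hwv, huw, hwvp⟩
    rcases (hD' u w).1 huw with hD | ⟨huI, hweq⟩ | ⟨hugeq, _⟩
    · have hwg : w ≠ g := fun h => (hg u).1 (h ▸ hD)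
      rcases (key w hwvp).2 hwg with h1 | ⟨b, hb, a, ha, h2, h3⟩
      · exact Or.inl ⟨w, hwv, hD, h1⟩
      · exact Or.inr ⟨b, hb, a, ha, Relation.ReflTransGen.head hD h2, h3⟩
    · obtain ⟨a, ha, hav⟩ := (key w hwvp).1 hweq
      exact Or.inr ⟨u, huI, a, ha, Relation.ReflTransGen.refl, hav⟩
    · exact absurd hugeq hug
  · rintro (⟨w, hwv, hD, hwvp⟩ | ⟨b, hb, a, ha, hub, hav⟩)
    · exact ⟨w, hwv, (hD' u w).2 (Or.inl hD), lift hwvp⟩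
    · have hbg : D' b g := (hD' b g).2 (Or.inr (Or.inl ⟨hb, rfl⟩))
      have hga : D' g a := (hD' g a).2 (Or.inr (Or.inr ⟨rfl, ha⟩))
      rcases hub.cases_head with heq | ⟨c, huc, hcb⟩
      · exact ⟨g, fun h => hvg h.symm, by rw [heq]; exact hbg,
          Relation.ReflTransGen.head hga (lift hav)⟩
      · have hcv : c ≠ v := by
          rintro rfl
          exact hAcyclic c (Relation.TransGen.trans_right
            ((lift hcb).trans (Relation.ReflTransGen.single hbg))
            (Relation.TransGen.head' hga (lift hav)))
        exact ⟨c, hcv, (hD' u c).2 (Or.inl huc),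
          (lift hcb).trans (Relation.ReflTransGen.head hbg
            (Relation.ReflTransGen.head hga (lift hav)))⟩
end
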